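/- Let X be a set, let G be a group acting faithfully on X, and let H ≤ G. For x, y ∈ X write x ∼ y if the stabilizers H_x and H_y are conjugate subgroups of H, and suppose this equivalence relation on X has finitely many classes X_1,…,X_t. Assume that for every g ∈ G and every a ∈ {1,…,t} with g(X_a) = X_a, the permutation of X that agrees with g on X_a and fixes X ∖ X_a pointwise is again realized by an element of G. For each a let C_a = {c ∈ C_G(H) : c fixes X ∖ X_a pointwise}. Then every element of C_G(H) maps each X_a onto itself, elements of C_a and C_b commute for a ≠ b, and the multiplication map C_1 × C_2 × ⋯ × C_t → C_G(H), (c_1,…,c_t) ↦ c_1 c_2 ⋯ c_t, is a group isomorphism. -/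

import Mathlib

/-- The stabilizers (in the subgroup `H`) of the points `x` and `y` are
conjugate subgroups of `H`: there is `h ∈ H` with `H_y = h H_x h⁻¹`. -/
def StabConj {G X : Type*} [Group G] [MulAction G X] (H : Subgroup G)
    (x y : X) : Prop :=
  ∃ h ∈ H, ∀ g ∈ H, g • y = y ↔ (h⁻¹ * g * h) • x = x

/-- The subgroup of elements of the centralizer of `H` that fix the
complement of `s` pointwise. -/
def fixComp {G X : Type*} [Group G] [MulAction G X] (H : Subgroup G)
    (s : Set X) : Subgroup G :=
  Subgroup.centralizer (H : Set G) ⊓ ⨅ x ∈ sᶜ, MulAction.stabilizer G x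

lemma mem_fixComp_iff {G X : Type*} [Group G] [MulAction G X] (H : Subgroup G)
    (s : Set X) (c : G) :
    c ∈ fixComp H s ↔ c ∈ Subgroup.centralizer (H : Set G) ∧ ∀ x ∉ s, c • x = x := by
  simp [fixComp, Subgroup.mem_inf, Subgroup.mem_iInf, MulAction.mem_stabilizer_iff,
    Set.mem_compl_iff]

lemma prod_smul_fix {G X : Type*} [Group G] [MulAction G X] :
    ∀ (l : List G) (x : X), (∀ g ∈ l, g • x = x) → l.prod • x = x := by
  intro l
  induction l with
  | nil => intro x _; simp
  | cons g l ih =>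
    intro x h
    rw [List.prod_cons, mul_smul, ih x fun k hk => h k (List.mem_cons_of_mem g hk),
      h g List.mem_cons_self]

lemma prod_smul_key {G X : Type*} [Group G] [MulAction G X] :
    ∀ {t : ℕ} (f : Fin t → G) (a : Fin t) (x : X),
      (∀ b, b ≠ a → f b • x = x) → (∀ b, b ≠ a → f b • (f a • x) = f a • x) →
      (List.ofFn f).prod • x = f a • x := by
  intro t
  induction t with
  | zero => intro f a; exact a.elim0
  | succ n ih =>
    intro f a x h1 h2
    rw [List.ofFn_succ, List.prod_cons, mul_smul]
    rcases Fin.eq_zero_or_eq_succ a with rfl | ⟨c, rfl⟩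
    · have hfix : (List.ofFn fun i : Fin n => f i.succ).prod • x = x := by
        apply prod_smul_fix
        intro g hg
        obtain ⟨b, rfl⟩ := List.mem_ofFn.mp hg
        exact h1 b.succ (Fin.succ_ne_zero b)
      rw [hfix]
    · have hrest : (List.ofFn fun i : Fin n => f i.succ).prod • x = f c.succ • x := by
        apply ih (fun i => f i.succ) c x
        · intro b hb
          exact h1 b.succ (by simpa [Fin.succ_inj] using hb)
        · intro b hb
          exact h2 b.succ (by simpa [Fin.succ_inj] using hb)
      rw [hrest]
      exact h2 0 (Fin.succ_ne_zero c).symm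

/-- Let `G` act faithfully on `X`, let `H ≤ G`, and suppose
the equivalence relation "stabilizers in `H` are conjugate" has finitely many
classes `Xc 0, …, Xc (t-1)`.  Assume that for every `g ∈ G` and every class
`Xc a` with `g (Xc a) = Xc a`, the permutation agreeing with `g` on `Xc a` and
fixing the complement pointwise is realized by an element of `G`.  Then every
element of the centralizer `C_G(H)` maps each class onto itself, elements of
`C_a` and `C_b` commute for `a ≠ b`, and the multiplication map
`C_1 × ⋯ × C_t → C_G(H)` is a group isomorphism. -/
theorem centralizer_decomposes_as_product {G X : Type*} [Group G]
    [MulAction G X] [FaithfulSMul G X]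
    (H : Subgroup G) (t : ℕ) (Xc : Fin t → Set X)
    (hpart : ∀ x : X, ∃! a : Fin t, x ∈ Xc a)
    (hclasses : ∀ x y : X, StabConj H x y ↔ ∃ a : Fin t, x ∈ Xc a ∧ y ∈ Xc a)
    (hrealize : ∀ (g : G) (a : Fin t), (fun x => g • x) '' Xc a = Xc a →
      ∃ g' : G, (∀ x ∈ Xc a, g' • x = g • x) ∧ ∀ x ∉ Xc a, g' • x = x) :
    (∀ c ∈ Subgroup.centralizer (H : Set G), ∀ a : Fin t,
        (fun x => c • x) '' Xc a = Xc a) ∧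
    (∀ a b : Fin t, a ≠ b → ∀ c ∈ fixComp H (Xc a), ∀ d ∈ fixComp H (Xc b),
        Commute c d) ∧
    ∃ e : (∀ a : Fin t, ↥(fixComp H (Xc a))) ≃*
        ↥(Subgroup.centralizer (H : Set G)),
      ∀ f : ∀ a : Fin t, ↥(fixComp H (Xc a)),
        ((e f : G)) = (List.ofFn fun a => ((f a : G))).prod := by
  classical
  have hdisj : ∀ {x : X} {a b : Fin t}, x ∈ Xc a → x ∈ Xc b → a = b := by
    intro x a b ha hb
    obtain ⟨c, -, hc⟩ := hpart x
    rw [hc a ha, hc b hb]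
  -- the centralizer preserves classes
  have hcent_mem : ∀ c ∈ Subgroup.centralizer (H : Set G),
      ∀ {a : Fin t} {x : X}, x ∈ Xc a → c • x ∈ Xc a := by
    intro c hc a x hx
    have hsc : StabConj H x (c • x) := by
      refine ⟨1, one_mem H, fun g hg => ?_⟩
      have hcg : g * c = c * g := Subgroup.mem_centralizer_iff.mp hc g hg
      have hgc : g • (c • x) = c • (g • x) := by rw [← mul_smul, hcg, mul_smul]
      rw [inv_one, one_mul, mul_one, hgc, smul_left_cancel_iff]
    obtain ⟨b, hxb, hcxb⟩ := (hclasses x (c • x)).mp hsc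
    rwa [hdisj hxb hx] at hcxb
  -- H preserves classes
  have hH_mem : ∀ h ∈ H, ∀ {a : Fin t} {x : X}, x ∈ Xc a → h • x ∈ Xc a := by
    intro h hh a x hx
    have hsc : StabConj H x (h • x) := by
      refine ⟨h, hh, fun g hg => ?_⟩
      rw [mul_smul, mul_smul, inv_smul_eq_iff]
    obtain ⟨b, hxb, hcxb⟩ := (hclasses x (h • x)).mp hsc
    rwa [hdisj hxb hx] at hcxb
  have part1 : ∀ c ∈ Subgroup.centralizer (H : Set G), ∀ a : Fin t,
      (fun x => c • x) '' Xc a = Xc a := by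
    intro c hc a
    apply Set.Subset.antisymm
    · rintro _ ⟨x, hx, rfl⟩
      exact hcent_mem c hc hx
    · intro y hy
      exact ⟨c⁻¹ • y, hcent_mem _ (inv_mem hc) hy, smul_inv_smul c y⟩
  have hfix : ∀ {a : Fin t} {c : G}, c ∈ fixComp H (Xc a) →
      ∀ {x : X}, x ∉ Xc a → c • x = x := by
    intro a c hc x hx
    exact ((mem_fixComp_iff H (Xc a) c).mp hc).2 x hx
  have hfixC : ∀ {a : Fin t} {c : G}, c ∈ fixComp H (Xc a) →
      c ∈ Subgroup.centralizer (H : Set G) := by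
    intro a c hc
    exact ((mem_fixComp_iff H (Xc a) c).mp hc).1
  have part2 : ∀ a b : Fin t, a ≠ b → ∀ c ∈ fixComp H (Xc a),
      ∀ d ∈ fixComp H (Xc b), Commute c d := by
    intro a b hab c hc d hd
    show c * d = d * c
    refine eq_of_smul_eq_smul fun x : X => ?_
    obtain ⟨e, he, -⟩ := hpart x
    rw [mul_smul, mul_smul]
    by_cases hea : e = a
    · subst hea
      have h1 : d • x = x := hfix hd fun h => hab (hdisj he h)
      have h2 : d • (c • x) = c • x :=
        hfix hd fun h => hab (hdisj (hcent_mem c (hfixC hc) he) h)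
      rw [h1, h2]
    · have hxa : x ∉ Xc a := fun h => hea (hdisj he h)
      have h1 : c • x = x := hfix hc hxa
      by_cases heb : e = b
      · subst heb
        have h2 : c • (d • x) = d • x :=
          hfix hc fun h => hea (hdisj (hcent_mem d (hfixC hd) he) h)
        rw [h1, h2]
      · have hxb : x ∉ Xc b := fun h => heb (hdisj he h)
        have h2 : d • x = x := hfix hd hxb
        rw [h2, h1, h2]
  -- the multiplication map
  have hmemC : ∀ (f : ∀ a : Fin t, ↥(fixComp H (Xc a))),
      (List.ofFn fun a => ((f a : G))).prod ∈ Subgroup.centralizer (H : Set G) := by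
    intro f
    apply Subgroup.list_prod_mem
    intro g hg
    obtain ⟨a, rfl⟩ := List.mem_ofFn.mp hg
    exact hfixC (f a).2
  have hact : ∀ (f : ∀ a : Fin t, ↥(fixComp H (Xc a))) {a : Fin t} {x : X}, x ∈ Xc a →
      (List.ofFn fun b => ((f b : G))).prod • x = (f a : G) • x := by
    intro f a x hx
    apply prod_smul_key
    · intro b hb
      exact hfix (f b).2 fun h => hb (hdisj h hx)
    · intro b hb
      have hfa : (f a : G) • x ∈ Xc a := hcent_mem _ (hfixC (f a).2) hx
      exact hfix (f b).2 fun h => hb (hdisj h hfa)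
  let Φ : (∀ a : Fin t, ↥(fixComp H (Xc a))) →* ↥(Subgroup.centralizer (H : Set G)) :=
    MonoidHom.mk' (fun f => ⟨(List.ofFn fun a => ((f a : G))).prod, hmemC f⟩) (by
      intro f g
      apply Subtype.ext
      refine eq_of_smul_eq_smul fun x : X => ?_
      obtain ⟨a, ha, -⟩ := hpart x
      have hg : (g a : G) • x ∈ Xc a := hcent_mem _ (hfixC (g a).2) ha
      show (List.ofFn fun b => (((f * g) b : G))).prod • x
          = ((List.ofFn fun b => ((f b : G))).prod * (List.ofFn fun b => ((g b : G))).prod) • x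
      rw [hact (f * g) ha, mul_smul, hact g ha, hact f hg]
      simp [mul_smul])
  have hΦ : ∀ f : ∀ a : Fin t, ↥(fixComp H (Xc a)),
      (Φ f : G) = (List.ofFn fun a => ((f a : G))).prod := fun f => rfl
  have hinj : Function.Injective Φ := by
    refine (injective_iff_map_eq_one Φ).mpr fun f hf => ?_
    funext a
    apply Subtype.ext
    refine eq_of_smul_eq_smul fun x : X => ?_
    have hpr : (List.ofFn fun b => ((f b : G))).prod = 1 := by
      have := congrArg (Subtype.val) hf
      simpa [hΦ] using this
    by_cases hx : x ∈ Xc a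
    · have := hact f hx
      rw [hpr, one_smul] at this
      rw [← this]
      simp
    · rw [hfix (f a).2 hx]
      simp
  have hsurj : Function.Surjective Φ := by
    rintro ⟨c, hc⟩
    choose g' hg1 hg2 using fun a => hrealize c a (part1 c hc a)
    have hgC : ∀ a : Fin t, g' a ∈ fixComp H (Xc a) := by
      intro a
      rw [mem_fixComp_iff]
      refine ⟨Subgroup.mem_centralizer_iff.mpr fun h hh => ?_, hg2 a⟩
      refine eq_of_smul_eq_smul fun x : X => ?_
      rw [mul_smul, mul_smul]
      by_cases hx : x ∈ Xc a
      · rw [hg1 a x hx, hg1 a _ (hH_mem h hh hx), ← mul_smul,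
          Subgroup.mem_centralizer_iff.mp hc h hh, mul_smul]
      · have hhx : h • x ∉ Xc a := by
          intro hmem
          exact hx (by simpa using hH_mem h⁻¹ (inv_mem hh) hmem)
        rw [hg2 a x hx, hg2 a _ hhx]
    refine ⟨fun a => ⟨g' a, hgC a⟩, ?_⟩
    apply Subtype.ext
    refine eq_of_smul_eq_smul fun x : X => ?_
    obtain ⟨a, ha, -⟩ := hpart x
    show (List.ofFn fun b => ((g' b : G))).prod • x = c • x
    rw [hact (fun a => ⟨g' a, hgC a⟩) ha]
    exact hg1 a x ha
  exact ⟨part1, part2, MulEquiv.ofBijective Φ ⟨hinj, hsurj⟩, fun f => rfl⟩
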